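/- Let Y be a nonnegative random variable, let p: [t₁,∞) → [0,∞) be nondecreasing with 0 < p(2t) ≤ b·p(t) for all t ≥ t₁ (for some constants b > 1, t₁ > 0) and lim_{t→∞} p(t)·P(Y > t) = 0, and let h: [t₂,∞) → [0,∞) be nondecreasing with lim_{t→∞} h(t) = ∞ and lim_{t→∞} h(t+1)/h(t) = 1. Then limsup over integers n→∞ of log(p(n)·P(Y > n))/h(n) equals limsup over reals t→∞ of log(p(t)·P(Y > t))/h(t). -/

import Mathlib

open Filter MeasureTheory

theorem limsup_nat_eq_limsup_real
    {Ω : Type*} [MeasurableSpace Ω] (μ : Measure Ω) [IsProbabilityMeasure μ]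
    (Y : Ω → ℝ) (hYmeas : Measurable Y) (hYnonneg : ∀ ω, 0 ≤ Y ω)
    (p : ℝ → ℝ) (b t₁ : ℝ) (hb : 1 < b) (ht₁ : 0 < t₁)
    (hpnonneg : ∀ t, t₁ ≤ t → 0 ≤ p t)
    (hpmono : ∀ s t, t₁ ≤ s → s ≤ t → p s ≤ p t)
    (hpdouble : ∀ t, t₁ ≤ t → 0 < p (2 * t) ∧ p (2 * t) ≤ b * p t)
    (hpY : Tendsto (fun t => p t * (μ {ω | Y ω > t}).toReal) atTop (nhds 0))
    (h : ℝ → ℝ) (t₂ : ℝ) (ht₂ : 0 < t₂)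
    (hhnonneg : ∀ t, t₂ ≤ t → 0 ≤ h t)
    (hhmono : ∀ s t, t₂ ≤ s → s ≤ t → h s ≤ h t)
    (hhinf : Tendsto h atTop atTop)
    (hhratio : Tendsto (fun t => h (t + 1) / h t) atTop (nhds 1)) :
    Filter.limsup (fun n : ℕ =>
        ENNReal.log (ENNReal.ofReal (p n) * μ {ω | Y ω > (n : ℝ)}) / ((h n : ℝ) : EReal)) atTop
      = Filter.limsup (fun t : ℝ =>
        ENNReal.log (ENNReal.ofReal (p t) * μ {ω | Y ω > t}) / ((h t : ℝ) : EReal)) atTop := by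
  set F : ℝ → EReal := fun t =>
    ENNReal.log (ENNReal.ofReal (p t) * μ {ω | Y ω > t}) / ((h t : ℝ) : EReal) with hF
  -- easy direction: limsup over ℕ ≤ limsup over ℝ
  have hAB : limsup (fun n : ℕ => F (n : ℝ)) atTop ≤ limsup F atTop := by
    have : (fun n : ℕ => F (n : ℝ)) = F ∘ (fun n : ℕ => (n : ℝ)) := rfl
    rw [this, limsup_comp]
    exact limsup_le_limsup_of_le (tendsto_natCast_atTop_atTop (R := ℝ))
  -- eventually F t ≤ 0
  have hXeq : ∀ t, t₁ ≤ t → ENNReal.ofReal (p t) * μ {ω | Y ω > t}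
      = ENNReal.ofReal (p t * (μ {ω | Y ω > t}).toReal) := by
    intro t ht
    rw [ENNReal.ofReal_mul (hpnonneg t ht), ENNReal.ofReal_toReal (measure_ne_top μ _)]
  have hht : ∀ᶠ t : ℝ in atTop, 0 < h t := hhinf.eventually_gt_atTop 0
  have hF0 : ∀ᶠ t : ℝ in atTop, F t ≤ 0 := by
    filter_upwards [hht, eventually_ge_atTop t₁,
      hpY.eventually (eventually_le_nhds (show (0:ℝ) < 1 by norm_num))] with t h1 h2 h3
    apply EReal.div_nonpos_of_nonpos_of_nonneg _ (by exact_mod_cast h1.le)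
    rw [ENNReal.log_le_zero_iff, hXeq t h2]
    exact ENNReal.ofReal_le_one.2 h3
  have hB0 : limsup F atTop ≤ 0 := limsup_le_of_le (by isBoundedDefault) hF0
  refine le_antisymm hAB ?_
  by_contra hc
  push_neg at hc
  set A := limsup (fun n : ℕ => F (n : ℝ)) atTop with hA
  obtain ⟨c, hAc, hcB⟩ := EReal.exists_between_coe_real hc
  have hc0 : c < 0 := by exact_mod_cast hcB.trans_le hB0
  -- nat-level facts
  have hhnat : Tendsto (fun n : ℕ => h n) atTop atTop :=
    hhinf.comp tendsto_natCast_atTop_atTop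
  have hhnat1 : Tendsto (fun n : ℕ => h ((n : ℝ) + 1)) atTop atTop :=
    hhinf.comp (tendsto_atTop_add_const_right _ 1 tendsto_natCast_atTop_atTop)
  have N1 : ∀ᶠ n : ℕ in atTop,
      ENNReal.log (ENNReal.ofReal (p n) * μ {ω | Y ω > (n : ℝ)}) ≤ (c : EReal) * (h n : ℝ) := by
    filter_upwards [eventually_lt_of_limsup_lt hAc, hhnat.eventually_gt_atTop 0] with n h1 h2
    have hb0 : ((h (n:ℝ) : ℝ) : EReal) ≠ ⊤ := EReal.coe_ne_top _
    have := (EReal.div_le_iff_le_mul (by exact_mod_cast h2) hb0).1 h1.le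
    calc ENNReal.log (ENNReal.ofReal (p n) * μ {ω | Y ω > (n : ℝ)})
        ≤ ((h (n:ℝ) : ℝ) : EReal) * c := this
      _ = (c : EReal) * (h (n:ℝ) : ℝ) := mul_comm _ _
  have N2 : ∀ᶠ n : ℕ in atTop, Real.log b + c * h n ≤ 0 := by
    filter_upwards [hhnat.eventually_ge_atTop (Real.log b / (-c))] with n hn
    have := (div_le_iff₀ (by linarith : (0:ℝ) < -c)).1 hn
    nlinarith
  have N3 : ∀ᶠ n : ℕ in atTop, 0 < h (n : ℝ) ∧ 0 < h ((n : ℝ) + 1) :=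
    (hhnat.eventually_gt_atTop 0).and (hhnat1.eventually_gt_atTop 0)
  have N4 : ∀ᶠ n : ℕ in atTop, t₁ ≤ (n : ℝ) ∧ t₂ ≤ (n : ℝ) ∧ (1:ℝ) ≤ (n : ℝ) := by
    have h1 := tendsto_natCast_atTop_atTop (R := ℝ)
    exact ((h1.eventually_ge_atTop t₁).and ((h1.eventually_ge_atTop t₂).and
      (h1.eventually_ge_atTop 1)))
  set G : ℕ → ℝ := fun n => (Real.log b + c * h (n : ℝ)) / h ((n : ℝ) + 1) with hG
  -- G tends to c
  have hGc : Tendsto G atTop (nhds c) := by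
    have e1 : Tendsto (fun n : ℕ => Real.log b / h ((n:ℝ) + 1)) atTop (nhds 0) :=
      tendsto_const_nhds.div_atTop hhnat1
    have e2 : Tendsto (fun n : ℕ => h ((n:ℝ) + 1) / h (n:ℝ)) atTop (nhds 1) :=
      hhratio.comp tendsto_natCast_atTop_atTop
    have e3 : Tendsto (fun n : ℕ => h (n:ℝ) / h ((n:ℝ) + 1)) atTop (nhds 1) := by
      have := (e2.inv₀ one_ne_zero)
      simpa [inv_div] using this
    have : Tendsto (fun n : ℕ => Real.log b / h ((n:ℝ)+1) + c * (h (n:ℝ) / h ((n:ℝ)+1)))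
        atTop (nhds (0 + c * 1)) := e1.add (e3.const_mul c)
    simpa [hG, add_div, mul_div_assoc] using this
  -- main eventual bound: F t ≤ G ⌊t⌋₊
  have key : ∀ᶠ t : ℝ in atTop, F t ≤ ((G ⌊t⌋₊ : ℝ) : EReal) := by
    filter_upwards [tendsto_nat_floor_atTop.eventually (N1.and (N2.and (N3.and N4))),
      eventually_ge_atTop (0:ℝ), eventually_ge_atTop t₁, eventually_ge_atTop t₂, hht]
      with t hN ht0 htt₁ htt₂ hht'
    obtain ⟨hN1, hN2, ⟨hN3, hN3'⟩, hNt₁, hNt₂, hN1n⟩ := hN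
    set n := ⌊t⌋₊ with hn
    have hfl : (n : ℝ) ≤ t := Nat.floor_le ht0
    have hfl' : t ≤ (n : ℝ) + 1 := (Nat.lt_floor_add_one t).le
    -- numerator bound
    have hp1 : p t ≤ b * p n := by
      have h1 : p t ≤ p ((n:ℝ) + 1) := hpmono t _ htt₁ hfl'
      have h2 : p ((n:ℝ) + 1) ≤ p (2 * (n:ℝ)) := hpmono _ _ (htt₁.trans hfl') (by linarith)
      exact (h1.trans h2).trans (hpdouble _ hNt₁).2
    have hmeasle : μ {ω | Y ω > t} ≤ μ {ω | Y ω > (n:ℝ)} :=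
      measure_mono (fun ω hω => lt_of_le_of_lt hfl hω)
    have hXle : ENNReal.ofReal (p t) * μ {ω | Y ω > t}
        ≤ ENNReal.ofReal b * (ENNReal.ofReal (p n) * μ {ω | Y ω > (n:ℝ)}) := by
      rw [← mul_assoc, ← ENNReal.ofReal_mul (by linarith : (0:ℝ) ≤ b)]
      exact mul_le_mul' (ENNReal.ofReal_le_ofReal hp1) hmeasle
    have hlog : ENNReal.log (ENNReal.ofReal (p t) * μ {ω | Y ω > t})
        ≤ ((Real.log b + c * h (n:ℝ) : ℝ) : EReal) := by
      calc ENNReal.log (ENNReal.ofReal (p t) * μ {ω | Y ω > t})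
          ≤ ENNReal.log (ENNReal.ofReal b * (ENNReal.ofReal (p n) * μ {ω | Y ω > (n:ℝ)})) :=
            ENNReal.log_monotone hXle
        _ = ENNReal.log (ENNReal.ofReal b)
            + ENNReal.log (ENNReal.ofReal (p n) * μ {ω | Y ω > (n:ℝ)}) :=
            ENNReal.log_mul_add
        _ ≤ (Real.log b : EReal) + (c : EReal) * (h (n:ℝ) : ℝ) := by
            rw [ENNReal.log_ofReal_of_pos (by linarith : (0:ℝ) < b)]
            exact add_le_add_right hN1 _
        _ = ((Real.log b + c * h (n:ℝ) : ℝ) : EReal) := by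
            rw [← EReal.coe_mul, ← EReal.coe_add]
    have step1 : F t ≤ (((Real.log b + c * h (n:ℝ)) / h t : ℝ) : EReal) := by
      rw [EReal.coe_div]
      exact EReal.div_le_div_right_of_nonneg (by exact_mod_cast hht'.le) hlog
    refine step1.trans ?_
    rw [EReal.coe_le_coe_iff]
    -- real inequality: a / h t ≤ a / h (n+1) for a ≤ 0, 0 < h t ≤ h (n+1)
    have hle : h t ≤ h ((n:ℝ) + 1) := hhmono t _ htt₂ hfl'
    rw [div_le_div_iff₀ hht' hN3']
    nlinarith [hN2, hle, hht', hN3']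
  -- conclude
  have hGtends : Tendsto (fun t : ℝ => ((G ⌊t⌋₊ : ℝ) : EReal)) atTop (nhds (c : EReal)) := by
    rw [EReal.tendsto_coe]
    exact hGc.comp tendsto_nat_floor_atTop
  have : limsup F atTop ≤ (c : EReal) := by
    calc limsup F atTop ≤ limsup (fun t : ℝ => ((G ⌊t⌋₊ : ℝ) : EReal)) atTop :=
        limsup_le_limsup key
      _ = (c : EReal) := hGtends.limsup_eq
  exact absurd (hcB.trans_le this) (lt_irrefl _)
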